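/- For a p-independent set system with nonnegative weights, the greedy algorithm verifies a correlation gap of p+1: for any distribution D over subsets with marginals q, if S is drawn with each element i included independently with probability q_i, then E[weight of greedy(S)] ≥ (1/(p+1)) · E_{S~D}[w*(S)]. -/

import Mathlib

open Finset

/-- The weighted rank function of a set system. -/
noncomputable def wstar {n : ℕ} (I : Finset (Finset (Fin n)))
    (w : Fin n → ℝ) (S : Finset (Fin n)) : ℝ :=
  (S.powerset.filter (fun T => T ∈ I)).fold max 0 (fun T => ∑ i ∈ T, w i)

/-- Greedy: process elements in the given list order, adding an element whenever
feasibility is preserved. -/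
def greedyAux {n : ℕ} (I : Finset (Finset (Fin n))) :
    List (Fin n) → Finset (Fin n) → Finset (Fin n)
  | [], A => A
  | i :: rest, A =>
      if insert i A ∈ I then greedyAux I rest (insert i A) else greedyAux I rest A

/-- `B` is a base (maximal feasible subset) of `S`. -/
def IsBase {n : ℕ} (I : Finset (Finset (Fin n))) (S B : Finset (Fin n)) : Prop :=
  B ⊆ S ∧ B ∈ I ∧ ∀ x ∈ S \ B, insert x B ∉ I

/-- Marginal probability of element `i` under distribution `D`. -/
noncomputable def marginal {n : ℕ} (D : Finset (Fin n) → ℝ) (i : Fin n) : ℝ :=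
  ∑ S ∈ Finset.univ.filter (fun S : Finset (Fin n) => i ∈ S), D S

/-! ### Auxiliary definitions -/

/-- Product measure with marginals `q`. -/
noncomputable def muW {n : ℕ} (q : Fin n → ℝ) (S : Finset (Fin n)) : ℝ :=
  (∏ i ∈ S, q i) * ∏ i ∈ Sᶜ, (1 - q i)

/-- Greedy run on the first `t+1` elements of the order, restricted to `S`. -/
def BtG {n : ℕ} (I : Finset (Finset (Fin n))) (l : List (Fin n)) (t : ℕ)
    (S : Finset (Fin n)) : Finset (Fin n) :=
  greedyAux I ((l.take (t+1)).filter (fun x => x ∈ S)) ∅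

/-- Weight of the `t`-th element of the order (0 out of range). -/
noncomputable def lw {n : ℕ} (w : Fin n → ℝ) (l : List (Fin n)) (t : ℕ) : ℝ :=
  if h : t < l.length then w (l.get ⟨t, h⟩) else 0

/-! ### Greedy lemmas -/

section GreedyLemmas

variable {n : ℕ} {I : Finset (Finset (Fin n))} {w : Fin n → ℝ} {q : Fin n → ℝ}

lemma greedy_grow (L : List (Fin n)) (A : Finset (Fin n)) : A ⊆ greedyAux I L A := by
  induction L generalizing A with
  | nil => simp [greedyAux]
  | cons i rest ih =>
    simp only [greedyAux]; split
    · exact (Finset.subset_insert i A).trans (ih _)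
    · exact ih _

lemma greedy_subset (L : List (Fin n)) (A : Finset (Fin n)) :
    greedyAux I L A ⊆ A ∪ L.toFinset := by
  induction L generalizing A with
  | nil => simp [greedyAux]
  | cons i rest ih =>
    simp only [greedyAux]; split
    · refine (ih _).trans ?_
      intro x hx
      rcases Finset.mem_union.1 hx with h | h
      · rcases Finset.mem_insert.1 h with rfl | h
        · simp
        · exact Finset.mem_union.2 (Or.inl h)
      · simp [h]
    · refine (ih _).trans ?_
      intro x hx
      rcases Finset.mem_union.1 hx with h | h
      · exact Finset.mem_union.2 (Or.inl h)
      · simp [h]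

lemma greedy_mem_I (L : List (Fin n)) (A : Finset (Fin n)) (hA : A ∈ I) :
    greedyAux I L A ∈ I := by
  induction L generalizing A with
  | nil => simpa [greedyAux]
  | cons i rest ih =>
    simp only [greedyAux]; split
    · exact ih _ ‹_›
    · exact ih _ hA

lemma greedy_append (L1 L2 : List (Fin n)) (A : Finset (Fin n)) :
    greedyAux I (L1 ++ L2) A = greedyAux I L2 (greedyAux I L1 A) := by
  induction L1 generalizing A with
  | nil => simp [greedyAux]
  | cons i rest ih =>
    simp only [greedyAux, List.cons_append]; split <;> exact ih _

lemma greedy_reject (hdown : ∀ S T : Finset (Fin n), S ⊆ T → T ∈ I → S ∈ I)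
    (L : List (Fin n)) (A : Finset (Fin n)) (x : Fin n) (hx : x ∈ L)
    (hxo : x ∉ greedyAux I L A) : insert x (greedyAux I L A) ∉ I := by
  induction L generalizing A with
  | nil => simp at hx
  | cons i rest ih =>
    by_cases hins : insert i A ∈ I
    · simp only [greedyAux, if_pos hins] at hxo ⊢
      rcases List.mem_cons.1 hx with rfl | hx
      · exact absurd (greedy_grow rest _ (Finset.mem_insert_self x A)) hxo
      · exact ih _ hx hxo
    · simp only [greedyAux, if_neg hins] at hxo ⊢
      rcases List.mem_cons.1 hx with rfl | hx
      · intro hIn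
        exact hins (hdown _ _ (Finset.insert_subset_insert x (greedy_grow rest A)) hIn)
      · exact ih _ hx hxo

lemma greedy_prefix {L1 L2 : List (Fin n)} (hdisj : ∀ x ∈ L2, x ∉ L1.toFinset)
    (S : Finset (Fin n)) :
    (greedyAux I ((L1 ++ L2).filter (fun i => i ∈ S)) ∅) ∩ L1.toFinset
    = greedyAux I (L1.filter (fun i => i ∈ S)) ∅ := by
  classical
  rw [List.filter_append, greedy_append]
  set B := greedyAux I (L1.filter (fun i => i ∈ S)) ∅ with hB
  have hBP : B ⊆ L1.toFinset := by
    refine (greedy_subset _ _).trans ?_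
    simp only [Finset.empty_union]
    intro x hx
    exact List.mem_toFinset.2 (List.mem_of_mem_filter (List.mem_toFinset.1 hx))
  apply Finset.Subset.antisymm
  · intro x hx
    obtain ⟨hx1, hx2⟩ := Finset.mem_inter.1 hx
    rcases Finset.mem_union.1 (greedy_subset _ _ hx1) with h | h
    · exact h
    · exact absurd hx2 (by
        have := List.mem_of_mem_filter (List.mem_toFinset.1 h)
        exact hdisj _ this)
  · exact Finset.subset_inter (greedy_grow _ _) hBP

lemma insert_mem_greedy (hdown : ∀ S T : Finset (Fin n), S ⊆ T → T ∈ I → S ∈ I)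
    {L : List (Fin n)} (hnd : L.Nodup) {S : Finset (Fin n)} {i : Fin n}
    (hiS : i ∉ S) (hiL : i ∈ L)
    (hins : insert i (greedyAux I (L.filter (fun x => x ∈ S)) ∅) ∈ I) :
    i ∈ greedyAux I (L.filter (fun x => x ∈ insert i S)) ∅ := by
  classical
  obtain ⟨M1, M2, rfl⟩ := List.append_of_mem hiL
  have hndM : i ∉ M1 ∧ i ∉ M2 := by
    rw [List.nodup_append] at hnd
    refine ⟨fun h => ?_, ?_⟩
    · exact hnd.2.2 i h i List.mem_cons_self rfl
    · exact (List.nodup_cons.1 hnd.2.1).1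
  have hf1 : M1.filter (fun x => x ∈ insert i S) = M1.filter (fun x => x ∈ S) := by
    refine List.filter_congr fun x hx => ?_
    have : x ≠ i := fun h => hndM.1 (h ▸ hx)
    simp [Finset.mem_insert, this]
  have hf2 : M2.filter (fun x => x ∈ insert i S) = M2.filter (fun x => x ∈ S) := by
    refine List.filter_congr fun x hx => ?_
    have : x ≠ i := fun h => hndM.2 (h ▸ hx)
    simp [Finset.mem_insert, this]
  have hfi : (i :: M2).filter (fun x => x ∈ insert i S)
      = i :: M2.filter (fun x => x ∈ insert i S) := by
    simp [List.filter_cons]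
  have hfi' : (i :: M2).filter (fun x => x ∈ S) = M2.filter (fun x => x ∈ S) := by
    simp [List.filter_cons, hiS]
  rw [List.filter_append, hf1, hfi, hf2, greedy_append]
  rw [List.filter_append, hfi', greedy_append] at hins
  set G := greedyAux I (M1.filter (fun x => x ∈ S)) ∅ with hG
  have hGsub : G ⊆ greedyAux I (M2.filter (fun x => x ∈ S)) G := greedy_grow _ _
  have hinsG : insert i G ∈ I :=
    hdown _ _ (Finset.insert_subset_insert i hGsub) hins
  show i ∈ greedyAux I (i :: M2.filter (fun x => x ∈ S)) G
  simp only [greedyAux, if_pos hinsG]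
  exact greedy_grow _ _ (Finset.mem_insert_self i _)

/-! ### Base extension and rank bound -/

lemma exists_base_ext (U : Finset (Fin n)) :
    ∀ C : Finset (Fin n), C ⊆ U → C ∈ I → ∃ B, C ⊆ B ∧ IsBase I U B := by
  have H : ∀ k : ℕ, ∀ C : Finset (Fin n), (U \ C).card ≤ k → C ⊆ U → C ∈ I →
      ∃ B, C ⊆ B ∧ IsBase I U B := by
    intro k
    induction k with
    | zero =>
      intro C hcard hCU hCI
      have : U \ C = ∅ := Finset.card_eq_zero.1 (Nat.le_zero.1 hcard)
      refine ⟨C, subset_rfl, hCU, hCI, ?_⟩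
      intro x hx
      simp [this] at hx
    | succ k ih =>
      intro C hcard hCU hCI
      by_cases hall : ∀ x ∈ U \ C, insert x C ∉ I
      · exact ⟨C, subset_rfl, hCU, hCI, hall⟩
      · push_neg at hall
        obtain ⟨x, hxU, hxI⟩ := hall
        have hxC : x ∉ C := (Finset.mem_sdiff.1 hxU).2
        have h1 : U \ insert x C ⊂ U \ C := by
          refine Finset.ssubset_iff_of_subset
            (Finset.sdiff_subset_sdiff subset_rfl (Finset.subset_insert x C)) |>.2 ?_
          exact ⟨x, Finset.mem_sdiff.2 ⟨(Finset.mem_sdiff.1 hxU).1, hxC⟩, by simp⟩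
        obtain ⟨B, hB1, hB2⟩ := ih (insert x C)
          (by
            have := Finset.card_lt_card h1
            omega)
          (Finset.insert_subset (Finset.mem_sdiff.1 hxU).1 hCU) hxI
        exact ⟨B, (Finset.subset_insert x C).trans hB1, hB2⟩
  intro C hCU hCI
  exact H (U \ C).card C le_rfl hCU hCI

lemma rank_bound {p : ℝ} (hp : (0:ℝ) < p)
    (hdown : ∀ S T : Finset (Fin n), S ⊆ T → T ∈ I → S ∈ I)
    (hpind : ∀ S B₁ B₂ : Finset (Fin n), S.Nonempty → IsBase I S B₁ →
      IsBase I S B₂ → (B₁.card : ℝ) ≤ p * B₂.card)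
    (B C : Finset (Fin n)) (hB : B ∈ I) (hC : C ∈ I) :
    (C.card : ℝ) ≤ p * B.card + ((C.filter (fun x => x ∉ B ∧ insert x B ∈ I)).card : ℝ) := by
  classical
  set C1 := C.filter (fun x => ¬(x ∉ B ∧ insert x B ∈ I)) with hC1
  have hsplit : C1.card + (C.filter (fun x => x ∉ B ∧ insert x B ∈ I)).card = C.card := by
    rw [hC1, add_comm, Finset.card_filter_add_card_filter_not]
  have hC1card : (C1.card : ℝ) ≤ p * B.card := by
    set U := B ∪ C1 with hU
    have hBbase : IsBase I U B := by
      refine ⟨Finset.subset_union_left, hB, ?_⟩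
      intro x hx
      have hx1 : x ∈ C1 := by
        rcases Finset.mem_union.1 (Finset.mem_sdiff.1 hx).1 with h | h
        · exact absurd h (Finset.mem_sdiff.1 hx).2
        · exact h
      have := (Finset.mem_filter.1 hx1).2
      push_neg at this
      exact this ((Finset.mem_sdiff.1 hx).2)
    have hC1I : C1 ∈ I := hdown _ _ (Finset.filter_subset _ _) hC
    obtain ⟨B₁, hCB₁, hB₁⟩ := exists_base_ext U C1 Finset.subset_union_right hC1I
    rcases Finset.eq_empty_or_nonempty U with hUe | hUne
    · have : C1 = ∅ := Finset.subset_empty.1 (hUe ▸ Finset.subset_union_right)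
      simp [this]
      positivity
    · calc (C1.card : ℝ) ≤ B₁.card := by exact_mod_cast Finset.card_le_card hCB₁
        _ ≤ p * B.card := hpind U B₁ B hUne hB₁ hBbase
  have : (C.card : ℝ) = (C1.card : ℝ) + ((C.filter (fun x => x ∉ B ∧ insert x B ∈ I)).card : ℝ) := by
    exact_mod_cast hsplit.symm
  linarith

/-! ### wstar and weight layering -/

lemma wstar_attained (hempty : ∅ ∈ I) (S : Finset (Fin n)) :
    ∃ C, C ⊆ S ∧ C ∈ I ∧ wstar I w S ≤ ∑ i ∈ C, w i := by
  classical
  set s := S.powerset.filter (fun T => T ∈ I) with hs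
  have hmem : ∅ ∈ s := by simp [hs, hempty]
  obtain ⟨C, hCs, hmax⟩ := s.exists_max_image (fun T => ∑ i ∈ T, w i) ⟨∅, hmem⟩
  refine ⟨C, Finset.mem_powerset.1 (Finset.mem_filter.1 hCs).1, (Finset.mem_filter.1 hCs).2, ?_⟩
  have h0 : (0:ℝ) ≤ ∑ i ∈ C, w i := by simpa using hmax ∅ hmem
  exact (Finset.fold_max_le _).2 ⟨h0, hmax⟩

lemma mem_take_iff_lt {l : List (Fin n)} (hnd : l.Nodup) {s : ℕ} (hs : s < l.length)
    (k : ℕ) : l.get ⟨s, hs⟩ ∈ l.take k ↔ s < k := by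
  constructor
  · intro h
    obtain ⟨j, hj, hget⟩ := List.mem_iff_getElem.1 h
    have hjl : j < l.length := lt_of_lt_of_le hj (by simpa using List.length_take_le k l)
    have hjk : j < k := lt_of_lt_of_le hj (by simp)
    have : l[j] = l.get ⟨s, hs⟩ := by
      rw [← hget, List.getElem_take]
    have : j = s := by
      have := (List.Nodup.getElem_inj_iff hnd).1 this
      simpa using this
    omega
  · intro hk
    have h2 : (l.take k)[s]'(by simp [hs, hk]) = l.get ⟨s, hs⟩ := by
      rw [List.get_eq_getElem, List.getElem_take]
    rw [← h2]
    exact List.getElem_mem _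

lemma sum_telescope' (f : ℕ → ℝ) {m k : ℕ} (h : m ≤ k) :
    ∑ i ∈ Finset.Ico m k, (f i - f (i+1)) = f m - f k := by
  induction k, h using Nat.le_induction with
  | base => simp
  | succ k hmk ih => rw [Finset.sum_Ico_succ_top hmk, ih]; ring

lemma weight_layer {l : List (Fin n)} (hnd : l.Nodup) (henum : l.toFinset = Finset.univ)
    (T : Finset (Fin n)) :
    ∑ i ∈ T, w i = ∑ t ∈ Finset.range l.length,
      (lw w l t - lw w l (t+1)) * ((T ∩ (l.take (t+1)).toFinset).card : ℝ) := by
  classical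
  have hcard : ∀ t, ((T ∩ (l.take (t+1)).toFinset).card : ℝ)
      = ∑ i ∈ T, (if i ∈ l.take (t+1) then (1:ℝ) else 0) := by
    intro t
    have he : T.filter (fun i => i ∈ l.take (t+1)) = T ∩ (l.take (t+1)).toFinset := by
      ext x; simp [List.mem_toFinset]
    rw [Finset.sum_boole, he]
  calc ∑ i ∈ T, w i
      = ∑ i ∈ T, ∑ t ∈ Finset.range l.length,
          (lw w l t - lw w l (t+1)) * (if i ∈ l.take (t+1) then (1:ℝ) else 0) := by
        refine Finset.sum_congr rfl fun i _ => ?_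
        have hi : i ∈ l := by
          rw [← List.mem_toFinset, henum]; exact Finset.mem_univ i
        obtain ⟨s, hgl⟩ := List.mem_iff_get.1 hi
        have hmem : ∀ t, (i ∈ l.take (t+1)) ↔ (s : ℕ) < t + 1 := by
          intro t; rw [← hgl]; exact mem_take_iff_lt hnd _ _
        have h1 : ∑ t ∈ Finset.range l.length,
            (lw w l t - lw w l (t+1)) * (if i ∈ l.take (t+1) then (1:ℝ) else 0)
            = ∑ t ∈ (Finset.range l.length).filter (fun t => (s:ℕ) ≤ t),
                (lw w l t - lw w l (t+1)) := by
          rw [Finset.sum_filter]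
          refine Finset.sum_congr rfl fun t _ => ?_
          by_cases h : (s:ℕ) ≤ t
          · rw [if_pos ((hmem t).2 (by omega)), if_pos h, mul_one]
          · rw [if_neg (fun hc => h (by have := (hmem t).1 hc; omega)), if_neg h, mul_zero]
        have h2 : (Finset.range l.length).filter (fun t => (s:ℕ) ≤ t)
            = Finset.Ico (s:ℕ) l.length := by
          ext t; simp [Finset.mem_Ico]; omega
        rw [h1, h2, sum_telescope' _ (le_of_lt s.2)]
        have h3 : lw w l (s:ℕ) = w i := by rw [lw, dif_pos s.2]; simp [← hgl]
        have h0 : lw w l l.length = 0 := by rw [lw, dif_neg (lt_irrefl _)]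
        rw [h3, h0, sub_zero]
    _ = _ := by
        rw [Finset.sum_comm]
        refine Finset.sum_congr rfl fun t _ => ?_
        rw [hcard, Finset.mul_sum]

/-! ### Probabilistic lemmas -/

lemma sum_split (i : Fin n) (F : Finset (Fin n) → ℝ) :
    ∑ S : Finset (Fin n), F S
    = ∑ S ∈ Finset.univ.filter (fun S : Finset (Fin n) => i ∉ S), (F S + F (insert i S)) := by
  classical
  rw [← Finset.sum_filter_add_sum_filter_not Finset.univ (fun S : Finset (Fin n) => i ∉ S) F,
    Finset.sum_add_distrib]
  congr 1
  refine Finset.sum_nbij' (fun S => S.erase i) (fun S => insert i S) ?_ ?_ ?_ ?_ ?_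
  · intro S hS
    simp only [Finset.mem_filter, Finset.mem_univ, true_and] at hS ⊢
    simp
  · intro S hS
    simp only [Finset.mem_filter, Finset.mem_univ, true_and, not_not] at hS ⊢
    simp [hS]
  · intro S hS
    simp only [Finset.mem_filter, Finset.mem_univ, true_and, not_not] at hS
    exact Finset.insert_erase hS
  · intro S hS
    simp only [Finset.mem_filter, Finset.mem_univ, true_and, not_not] at hS
    exact Finset.erase_insert hS
  · intro S hS
    simp only [Finset.mem_filter, Finset.mem_univ, true_and, not_not] at hS
    rw [Finset.insert_erase hS]

lemma muW_nonneg (hq0 : ∀ j, 0 ≤ q j) (hq1 : ∀ j, q j ≤ 1) (S : Finset (Fin n)) :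
    0 ≤ muW q S := by
  apply mul_nonneg <;> exact Finset.prod_nonneg fun j _ => by
    first | exact hq0 j | linarith [hq1 j]

lemma muW_sum : ∑ S : Finset (Fin n), muW q S = 1 := by
  classical
  have h := Finset.prod_add q (fun j => 1 - q j) (Finset.univ : Finset (Fin n))
  have h2 : ∀ j ∈ (Finset.univ : Finset (Fin n)), q j + (1 - q j) = 1 := fun j _ => by ring
  rw [Finset.prod_congr rfl h2, Finset.prod_const_one, Finset.powerset_univ] at h
  simp only [muW, Finset.compl_eq_univ_sdiff]
  exact h.symm

lemma key_ineq (hq0 : ∀ j, 0 ≤ q j) (hq1 : ∀ j, q j ≤ 1) (i : Fin n)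
    (B : Finset (Fin n) → Finset (Fin n))
    (hrej : ∀ S, i ∈ S → i ∉ B S → insert i (B S) ∉ I)
    (hins : ∀ S, i ∉ S → insert i (B S) ∈ I → i ∈ B (insert i S)) :
    q i * ∑ S : Finset (Fin n), muW q S *
        (if i ∉ B S ∧ insert i (B S) ∈ I then (1:ℝ) else 0)
      ≤ ∑ S : Finset (Fin n), muW q S * (if i ∈ B S then (1:ℝ) else 0) := by
  classical
  have hμ0 : ∀ S : Finset (Fin n), 0 ≤ muW q S := muW_nonneg hq0 hq1
  rw [Finset.mul_sum]
  rw [sum_split i (fun S => q i * (muW q S * (if i ∉ B S ∧ insert i (B S) ∈ I then (1:ℝ) else 0)))]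
  rw [sum_split i (fun S => muW q S * (if i ∈ B S then (1:ℝ) else 0))]
  refine Finset.sum_le_sum fun S hS => ?_
  have hiS : i ∉ S := by simpa using (Finset.mem_filter.1 hS).2
  have hind1 : (if i ∉ B (insert i S) ∧ insert i (B (insert i S)) ∈ I then (1:ℝ) else 0) = 0 := by
    rw [if_neg]
    rintro ⟨h1, h2⟩
    exact hrej (insert i S) (Finset.mem_insert_self i S) h1 h2
  rw [hind1, mul_zero, mul_zero, add_zero]
  have hRHS2 : 0 ≤ muW q S * (if i ∈ B S then (1:ℝ) else 0) :=
    mul_nonneg (hμ0 S) (by positivity)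
  by_cases hb : i ∉ B S ∧ insert i (B S) ∈ I
  · rw [if_pos hb, mul_one]
    have hmem : i ∈ B (insert i S) := hins S hiS hb.2
    rw [if_pos hmem, mul_one]
    have hic : i ∈ Sᶜ := Finset.mem_compl.2 hiS
    set ρ : ℝ := (∏ j ∈ S, q j) * ∏ j ∈ Sᶜ.erase i, (1 - q j) with hρdef
    have hρ : 0 ≤ ρ := by
      apply mul_nonneg <;> exact Finset.prod_nonneg fun j _ => by
        first | exact hq0 j | linarith [hq1 j]
    have h1q : (0:ℝ) ≤ 1 - q i := by linarith [hq1 i]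
    have hμS : muW q S = (1 - q i) * ρ := by
      show (∏ j ∈ S, q j) * ∏ j ∈ Sᶜ, (1 - q j) = _
      rw [hρdef, ← Finset.mul_prod_erase _ _ hic]; ring
    have hμi : muW q (insert i S) = q i * ρ := by
      show (∏ j ∈ insert i S, q j) * ∏ j ∈ (insert i S)ᶜ, (1 - q j) = _
      rw [hρdef, Finset.compl_insert, Finset.prod_insert hiS]; ring
    rw [hμS, hμi]
    have hX : (0:ℝ) ≤ (1 - q i) * ρ * (if i ∈ B S then (1:ℝ) else 0) :=
      mul_nonneg (mul_nonneg h1q hρ) (by positivity)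
    nlinarith [mul_nonneg (mul_nonneg (hq0 i) (hq0 i)) hρ]
  · rw [if_neg hb, mul_zero, mul_zero]
    exact add_nonneg hRHS2 (mul_nonneg (hμ0 _) (by positivity))

end GreedyLemmas

/-- In a `p`-independent system, greedy verifies a correlation gap of `p+1`:
the expected greedy weight on an independent draw with the marginals of `D`
is at least `1/(p+1)` times the expected weighted rank under `D`. -/
theorem greedy_verifies_correlation_gap {n : ℕ}
    (I : Finset (Finset (Fin n))) (w : Fin n → ℝ) (p : ℝ)
    (hp : 0 < p)
    (hw : ∀ i, 0 ≤ w i)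
    (hempty : ∅ ∈ I)
    (hdown : ∀ S T : Finset (Fin n), S ⊆ T → T ∈ I → S ∈ I)
    (hpind : ∀ S B₁ B₂ : Finset (Fin n), S.Nonempty → IsBase I S B₁ →
      IsBase I S B₂ → (B₁.card : ℝ) ≤ p * B₂.card)
    (l : List (Fin n)) (hnodup : l.Nodup) (henum : l.toFinset = Finset.univ)
    (hsorted : l.Pairwise (fun a b => w b ≤ w a))
    (D : Finset (Fin n) → ℝ)
    (hD0 : ∀ S, 0 ≤ D S) (hD1 : ∑ S : Finset (Fin n), D S = 1) :
    (1 / (p + 1)) * (∑ S : Finset (Fin n), D S * wstar I w S) ≤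
      ∑ S : Finset (Fin n),
        ((∏ i ∈ S, marginal D i) * ∏ i ∈ Sᶜ, (1 - marginal D i)) *
          ∑ i ∈ greedyAux I (l.filter (fun i => i ∈ S)) ∅, w i := by
  classical
  set q : Fin n → ℝ := marginal D with hqdef
  have hq0 : ∀ j, 0 ≤ q j := fun j => Finset.sum_nonneg fun S _ => hD0 S
  have hq1 : ∀ j, q j ≤ 1 := by
    intro j
    calc q j ≤ ∑ S : Finset (Fin n), D S :=
          Finset.sum_le_sum_of_subset_of_nonneg (Finset.filter_subset _ _)
            (fun S _ _ => hD0 S)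
      _ = 1 := hD1
  have hμ0 : ∀ S : Finset (Fin n), 0 ≤ muW q S := muW_nonneg hq0 hq1
  have hμ1 : ∑ S : Finset (Fin n), muW q S = 1 := muW_sum
  have hmarg : ∀ i : Fin n, ∑ S : Finset (Fin n), D S * (if i ∈ S then (1:ℝ) else 0) = q i := by
    intro i
    show _ = marginal D i
    rw [marginal, Finset.sum_filter]
    refine Finset.sum_congr rfl fun S _ => ?_
    by_cases h : i ∈ S <;> simp [h]
  -- abbreviations (definitional)
  have hδ0 : ∀ t, 0 ≤ lw w l t - lw w l (t+1) := by
    intro t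
    by_cases h : t + 1 < l.length
    · have ht : t < l.length := by omega
      rw [lw, lw, dif_pos h, dif_pos ht]
      have := List.Pairwise.rel_get_of_lt hsorted
        (show (⟨t, ht⟩ : Fin l.length) < ⟨t+1, h⟩ from by simp)
      simpa using this
    · rw [lw, lw, dif_neg h]
      by_cases ht : t < l.length
      · rw [dif_pos ht]; have := hw (l.get ⟨t, ht⟩); linarith
      · rw [dif_neg ht]; simp
  have hBtP : ∀ t S, BtG I l t S ⊆ (l.take (t+1)).toFinset := by
    intro t S
    refine (greedy_subset _ _).trans ?_
    simp only [Finset.empty_union]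
    intro x hx
    exact List.mem_toFinset.2 (List.mem_of_mem_filter (List.mem_toFinset.1 hx))
  have hBtI : ∀ t S, BtG I l t S ∈ I := fun t S => greedy_mem_I _ _ hempty
  have hprefix : ∀ t S, (greedyAux I (l.filter (fun i => i ∈ S)) ∅) ∩ (l.take (t+1)).toFinset
      = BtG I l t S := by
    intro t S
    have hdisj : ∀ x ∈ l.drop (t+1), x ∉ (l.take (t+1)).toFinset := by
      intro x hx hx'
      exact (List.disjoint_take_drop hnodup le_rfl) (List.mem_toFinset.1 hx') hx
    have h := greedy_prefix (I := I) hdisj S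
    rw [List.take_append_drop] at h
    exact h
  -- RHS rewriting
  have hRHS : ∑ S : Finset (Fin n), muW q S * ∑ i ∈ greedyAux I (l.filter (fun i => i ∈ S)) ∅, w i
      = ∑ t ∈ Finset.range l.length, (lw w l t - lw w l (t+1)) *
          (∑ S : Finset (Fin n), muW q S * ((BtG I l t S).card : ℝ)) := by
    have h1 : ∀ S : Finset (Fin n), ∑ i ∈ greedyAux I (l.filter (fun i => i ∈ S)) ∅, w i
        = ∑ t ∈ Finset.range l.length, (lw w l t - lw w l (t+1)) * ((BtG I l t S).card : ℝ) := by
      intro S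
      rw [weight_layer hnodup henum]
      refine Finset.sum_congr rfl fun t _ => ?_
      rw [hprefix t S]
    calc ∑ S : Finset (Fin n), muW q S * ∑ i ∈ greedyAux I (l.filter (fun i => i ∈ S)) ∅, w i
        = ∑ S : Finset (Fin n), ∑ t ∈ Finset.range l.length,
            muW q S * ((lw w l t - lw w l (t+1)) * ((BtG I l t S).card : ℝ)) := by
          refine Finset.sum_congr rfl fun S _ => ?_
          rw [h1 S, Finset.mul_sum]
      _ = ∑ t ∈ Finset.range l.length, ∑ S : Finset (Fin n),
            muW q S * ((lw w l t - lw w l (t+1)) * ((BtG I l t S).card : ℝ)) :=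
          Finset.sum_comm
      _ = _ := by
          refine Finset.sum_congr rfl fun t _ => ?_
          rw [Finset.mul_sum]
          refine Finset.sum_congr rfl fun S _ => by ring
  -- choose max-weight independent subsets
  choose C hC1 hC2 hC3 using fun S => wstar_attained (I := I) (w := w) hempty S
  -- pointwise rank bound, averaged over the product measure
  have hpoint : ∀ t (S : Finset (Fin n)),
      (((C S) ∩ (l.take (t+1)).toFinset).card : ℝ)
      ≤ p * (∑ S' : Finset (Fin n), muW q S' * ((BtG I l t S').card : ℝ))
        + ∑ i ∈ (l.take (t+1)).toFinset, (if i ∈ S then (1:ℝ) else 0) *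
            (∑ S' : Finset (Fin n), muW q S' *
              (if i ∉ BtG I l t S' ∧ insert i (BtG I l t S') ∈ I then (1:ℝ) else 0)) := by
    intro t S
    have hCtI : (C S) ∩ (l.take (t+1)).toFinset ∈ I :=
      hdown _ _ Finset.inter_subset_left (hC2 S)
    have per : ∀ S' : Finset (Fin n), (((C S) ∩ (l.take (t+1)).toFinset).card : ℝ)
        ≤ p * ((BtG I l t S').card : ℝ)
          + ∑ i ∈ (l.take (t+1)).toFinset, (if i ∈ S then (1:ℝ) else 0) *
              (if i ∉ BtG I l t S' ∧ insert i (BtG I l t S') ∈ I then (1:ℝ) else 0) := by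
      intro S'
      refine (rank_bound hp hdown hpind (BtG I l t S') _ (hBtI t S') hCtI).trans ?_
      have hsub : ((C S) ∩ (l.take (t+1)).toFinset).filter
          (fun x => x ∉ BtG I l t S' ∧ insert x (BtG I l t S') ∈ I)
          ⊆ (l.take (t+1)).toFinset :=
        (Finset.filter_subset _ _).trans Finset.inter_subset_right
      have hcard : ((((C S) ∩ (l.take (t+1)).toFinset).filter
            (fun x => x ∉ BtG I l t S' ∧ insert x (BtG I l t S') ∈ I)).card : ℝ)
          = ∑ i ∈ ((C S) ∩ (l.take (t+1)).toFinset).filter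
              (fun x => x ∉ BtG I l t S' ∧ insert x (BtG I l t S') ∈ I),
              (if i ∈ S then (1:ℝ) else 0) *
                (if i ∉ BtG I l t S' ∧ insert i (BtG I l t S') ∈ I then (1:ℝ) else 0) := by
        rw [Finset.card_eq_sum_ones]
        push_cast
        refine Finset.sum_congr rfl fun i hi => ?_
        obtain ⟨hi1, hi2⟩ := Finset.mem_filter.1 hi
        rw [if_pos (hC1 S (Finset.mem_inter.1 hi1).1), if_pos hi2]
        norm_num
      refine add_le_add_right ?_ _
      rw [hcard]
      exact Finset.sum_le_sum_of_subset_of_nonneg hsub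
        (fun i _ _ => mul_nonneg (by positivity) (by positivity))
    calc (((C S) ∩ (l.take (t+1)).toFinset).card : ℝ)
        = ∑ S' : Finset (Fin n), muW q S' * (((C S) ∩ (l.take (t+1)).toFinset).card : ℝ) := by
          rw [← Finset.sum_mul, hμ1, one_mul]
      _ ≤ ∑ S' : Finset (Fin n), muW q S' *
            (p * ((BtG I l t S').card : ℝ)
              + ∑ i ∈ (l.take (t+1)).toFinset, (if i ∈ S then (1:ℝ) else 0) *
                  (if i ∉ BtG I l t S' ∧ insert i (BtG I l t S') ∈ I then (1:ℝ) else 0)) :=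
          Finset.sum_le_sum fun S' _ => mul_le_mul_of_nonneg_left (per S') (hμ0 S')
      _ = _ := by
          simp only [mul_add]
          rw [Finset.sum_add_distrib]
          congr 1
          · rw [Finset.mul_sum]
            refine Finset.sum_congr rfl fun S' _ => by ring
          · rw [show (∑ S' : Finset (Fin n), muW q S' *
                ∑ i ∈ (l.take (t+1)).toFinset, (if i ∈ S then (1:ℝ) else 0) *
                  (if i ∉ BtG I l t S' ∧ insert i (BtG I l t S') ∈ I then (1:ℝ) else 0))
                = ∑ i ∈ (l.take (t+1)).toFinset, ∑ S' : Finset (Fin n), muW q S' *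
                  ((if i ∈ S then (1:ℝ) else 0) *
                    (if i ∉ BtG I l t S' ∧ insert i (BtG I l t S') ∈ I then (1:ℝ) else 0))
              from by
                rw [← Finset.sum_comm]
                exact Finset.sum_congr rfl fun S' _ => by rw [Finset.mul_sum]]
            refine Finset.sum_congr rfl fun i _ => ?_
            rw [Finset.mul_sum]
            refine Finset.sum_congr rfl fun S' _ => by ring
  -- the key inequality, per element of the prefix
  have hkey : ∀ t, ∀ i ∈ (l.take (t+1)).toFinset,
      q i * (∑ S' : Finset (Fin n), muW q S' *
          (if i ∉ BtG I l t S' ∧ insert i (BtG I l t S') ∈ I then (1:ℝ) else 0))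
      ≤ ∑ S' : Finset (Fin n), muW q S' * (if i ∈ BtG I l t S' then (1:ℝ) else 0) := by
    intro t i hi
    have hiL : i ∈ l.take (t+1) := List.mem_toFinset.1 hi
    have hndL : (l.take (t+1)).Nodup := (List.take_sublist _ _).nodup hnodup
    refine key_ineq hq0 hq1 i (BtG I l t) ?_ ?_
    · intro S hiS hiB
      exact greedy_reject hdown _ ∅ i (List.mem_filter.2 ⟨hiL, by simpa⟩) hiB
    · intro S hiS hins'
      exact insert_mem_greedy hdown hndL hiS hiL hins'
  have hsum_ind : ∀ t, ∑ i ∈ (l.take (t+1)).toFinset,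
      (∑ S' : Finset (Fin n), muW q S' * (if i ∈ BtG I l t S' then (1:ℝ) else 0))
      = ∑ S' : Finset (Fin n), muW q S' * ((BtG I l t S').card : ℝ) := by
    intro t
    rw [Finset.sum_comm]
    refine Finset.sum_congr rfl fun S' _ => ?_
    rw [← Finset.mul_sum]
    congr 1
    have hfe : (l.take (t+1)).toFinset.filter (fun i => i ∈ BtG I l t S') = BtG I l t S' := by
      ext x
      simp only [Finset.mem_filter]
      exact ⟨fun h => h.2, fun h => ⟨hBtP t S' h, h⟩⟩
    rw [Finset.sum_boole, hfe]
  -- main chain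
  have main : ∑ S : Finset (Fin n), D S * wstar I w S
      ≤ (p + 1) * ∑ t ∈ Finset.range l.length, (lw w l t - lw w l (t+1)) *
          (∑ S' : Finset (Fin n), muW q S' * ((BtG I l t S').card : ℝ)) := by
    calc ∑ S : Finset (Fin n), D S * wstar I w S
        ≤ ∑ S : Finset (Fin n), D S * ∑ t ∈ Finset.range l.length,
            (lw w l t - lw w l (t+1)) * (((C S) ∩ (l.take (t+1)).toFinset).card : ℝ) := by
          refine Finset.sum_le_sum fun S _ => mul_le_mul_of_nonneg_left ?_ (hD0 S)
          refine (hC3 S).trans ?_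
          rw [weight_layer hnodup henum]
      _ = ∑ t ∈ Finset.range l.length, (lw w l t - lw w l (t+1)) *
            ∑ S : Finset (Fin n), D S * (((C S) ∩ (l.take (t+1)).toFinset).card : ℝ) := by
          simp only [Finset.mul_sum]
          rw [Finset.sum_comm]
          refine Finset.sum_congr rfl fun t _ => ?_
          refine Finset.sum_congr rfl fun S _ => by ring
      _ ≤ ∑ t ∈ Finset.range l.length, (lw w l t - lw w l (t+1)) *
            ((p + 1) * (∑ S' : Finset (Fin n), muW q S' * ((BtG I l t S').card : ℝ))) := by
          refine Finset.sum_le_sum fun t ht => mul_le_mul_of_nonneg_left ?_ (hδ0 t)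
          calc ∑ S : Finset (Fin n), D S * (((C S) ∩ (l.take (t+1)).toFinset).card : ℝ)
              ≤ ∑ S : Finset (Fin n), D S *
                  (p * (∑ S' : Finset (Fin n), muW q S' * ((BtG I l t S').card : ℝ))
                    + ∑ i ∈ (l.take (t+1)).toFinset, (if i ∈ S then (1:ℝ) else 0) *
                        (∑ S' : Finset (Fin n), muW q S' *
                          (if i ∉ BtG I l t S' ∧ insert i (BtG I l t S') ∈ I then (1:ℝ) else 0))) :=
                Finset.sum_le_sum fun S _ => mul_le_mul_of_nonneg_left (hpoint t S) (hD0 S)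
            _ = p * (∑ S' : Finset (Fin n), muW q S' * ((BtG I l t S').card : ℝ))
                + ∑ i ∈ (l.take (t+1)).toFinset, q i *
                    (∑ S' : Finset (Fin n), muW q S' *
                      (if i ∉ BtG I l t S' ∧ insert i (BtG I l t S') ∈ I then (1:ℝ) else 0)) := by
                simp only [mul_add]
                rw [Finset.sum_add_distrib]
                congr 1
                · rw [← Finset.sum_mul, hD1, one_mul]
                · rw [show (∑ S : Finset (Fin n), D S *
                      ∑ i ∈ (l.take (t+1)).toFinset, (if i ∈ S then (1:ℝ) else 0) *
                        (∑ S' : Finset (Fin n), muW q S' *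
                          (if i ∉ BtG I l t S' ∧ insert i (BtG I l t S') ∈ I then (1:ℝ) else 0)))
                      = ∑ i ∈ (l.take (t+1)).toFinset, ∑ S : Finset (Fin n), D S *
                        ((if i ∈ S then (1:ℝ) else 0) *
                          (∑ S' : Finset (Fin n), muW q S' *
                            (if i ∉ BtG I l t S' ∧ insert i (BtG I l t S') ∈ I then (1:ℝ) else 0)))
                    from by
                      rw [← Finset.sum_comm]
                      exact Finset.sum_congr rfl fun S _ => by rw [Finset.mul_sum]]
                  refine Finset.sum_congr rfl fun i _ => ?_
                  rw [← hmarg i, Finset.sum_mul]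
                  refine Finset.sum_congr rfl fun S _ => by ring
            _ ≤ p * (∑ S' : Finset (Fin n), muW q S' * ((BtG I l t S').card : ℝ))
                + ∑ i ∈ (l.take (t+1)).toFinset,
                    (∑ S' : Finset (Fin n), muW q S' *
                      (if i ∈ BtG I l t S' then (1:ℝ) else 0)) :=
                add_le_add_right (Finset.sum_le_sum fun i hi => hkey t i hi) _
            _ = (p + 1) * (∑ S' : Finset (Fin n), muW q S' * ((BtG I l t S').card : ℝ)) := by
                rw [hsum_ind t]; ring
      _ = _ := by
          rw [Finset.mul_sum]
          refine Finset.sum_congr rfl fun t _ => by ring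
  -- conclusion
  have hgoal : ∑ S : Finset (Fin n),
      ((∏ i ∈ S, q i) * ∏ i ∈ Sᶜ, (1 - q i)) *
        ∑ i ∈ greedyAux I (l.filter (fun i => i ∈ S)) ∅, w i
      = ∑ t ∈ Finset.range l.length, (lw w l t - lw w l (t+1)) *
          (∑ S' : Finset (Fin n), muW q S' * ((BtG I l t S').card : ℝ)) := by
    rw [← hRHS]
    refine Finset.sum_congr rfl fun S _ => ?_
    rw [muW]
  rw [hgoal]
  have hp1 : (0:ℝ) < p + 1 := by linarith
  rw [div_mul_eq_mul_div, div_le_iff₀ hp1, one_mul]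
  calc ∑ S : Finset (Fin n), D S * wstar I w S
      ≤ (p + 1) * ∑ t ∈ Finset.range l.length, (lw w l t - lw w l (t+1)) *
          (∑ S' : Finset (Fin n), muW q S' * ((BtG I l t S').card : ℝ)) := main
    _ = _ := by ring
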